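/- Let X be a finite-dimensional real normed space with norm ‖·‖, W an m-dimensional subspace, and μ a Borel probability measure on the space Hom_m(X,X) of rank-≤m endomorphisms supported in {π : ran π ⊆ W}. Suppose that for every m-dimensional subspace V of X there exists some Borel set A ⊆ V with 0 < 𝓗ᵐ_{‖·‖}(A) < ∞ and ∫ 𝓗ᵐ_{‖·‖}(π(A)) dμ(π) ≤ 𝓗ᵐ_{‖·‖}(A), with equality when V = W. Then the same inequality (with equality when V = W) holds for every Borel set A ⊆ V and every m-dimensional subspace V; i.e., μ is a density contractor on W. -/

import Mathlib

open MeasureTheory Set Module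
open scoped ENNReal NNReal

lemma key_lemma {X : Type*} [NormedAddCommGroup X] [NormedSpace ℝ X]
    [FiniteDimensional ℝ X] [MeasurableSpace X] [BorelSpace X]
    (m : ℕ) (V : Submodule ℝ X) (hV : Module.finrank ℝ V = m) (π : X →L[ℝ] X) :
    ∃ c : ℝ≥0∞, c ≠ ∞ ∧ ∀ A : Set X, A ⊆ (V : Set X) → MeasurableSet A →
      μH[(m : ℝ)] (⇑π '' A) = c * μH[(m : ℝ)] A := by
  classical
  set f : V →ₗ[ℝ] X := π.toLinearMap.comp V.subtype with hf
  have himg : ∀ A : Set X, A ⊆ (V : Set X) → ⇑π '' A = ⇑f '' (Subtype.val ⁻¹' A) := by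
    intro A hA
    ext x
    constructor
    · rintro ⟨a, ha, rfl⟩
      exact ⟨⟨a, hA ha⟩, ha, rfl⟩
    · rintro ⟨v, hv, rfl⟩
      exact ⟨v, hv, rfl⟩
  by_cases hinj : Function.Injective f
  · -- injective case
    set U : Submodule ℝ X := LinearMap.range f with hU
    let e : V ≃L[ℝ] U := (LinearEquiv.ofInjective f hinj).toContinuousLinearEquiv
    have hUr : Module.finrank ℝ U = m := by
      rw [← hV]; exact (LinearEquiv.finrank_eq (LinearEquiv.ofInjective f hinj)).symm
    haveI : Measure.IsAddHaarMeasure (μH[(m : ℝ)] : Measure U) := by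
      simp_rw [show ((m : ℝ)) = ((Module.finrank ℝ U : ℕ) : ℝ) by rw [hUr]]
      infer_instance
    haveI : Measure.IsAddHaarMeasure (μH[(m : ℝ)] : Measure V) := by
      simp_rw [show ((m : ℝ)) = ((Module.finrank ℝ V : ℕ) : ℝ) by rw [hV]]
      infer_instance
    set ν : Measure V := Measure.map e.symm (μH[(m : ℝ)] : Measure U) with hν
    haveI : Measure.IsAddHaarMeasure ν := e.symm.isAddHaarMeasure_map _
    have huniq : ν = Measure.addHaarScalarFactor ν (μH[(m : ℝ)] : Measure V) •
        (μH[(m : ℝ)] : Measure V) := Measure.isAddLeftInvariant_eq_smul _ _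
    refine ⟨(Measure.addHaarScalarFactor ν (μH[(m : ℝ)] : Measure V) : ℝ≥0∞),
      ENNReal.coe_ne_top, fun A hA hAm => ?_⟩
    set s : Set V := Subtype.val ⁻¹' A with hs
    have hsm : MeasurableSet s := measurable_subtype_coe hAm
    have hAs : A = Subtype.val '' s := by
      rw [hs, Set.image_preimage_eq_inter_range, Subtype.range_coe]
      exact (Set.inter_eq_left.2 hA).symm
    have hmnn : (0:ℝ) ≤ (m:ℝ) := Nat.cast_nonneg m
    have h1 : μH[(m : ℝ)] A = μH[(m : ℝ)] s := by
      rw [hAs]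
      exact isometry_subtype_coe.hausdorffMeasure_image (Or.inl hmnn) s
    have h2 : ⇑π '' A = Subtype.val '' (⇑e '' s) := by
      rw [himg A hA, ← hs]
      ext x
      simp only [Set.mem_image]
      constructor
      · rintro ⟨v, hv, rfl⟩
        exact ⟨e v, ⟨v, hv, rfl⟩, rfl⟩
      · rintro ⟨u, ⟨v, hv, rfl⟩, rfl⟩
        exact ⟨v, hv, rfl⟩
    have h3 : μH[(m : ℝ)] (⇑π '' A) = μH[(m : ℝ)] (⇑e '' s) := by
      rw [h2]
      exact isometry_subtype_coe.hausdorffMeasure_image (Or.inl hmnn) _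
    have h4 : ⇑e '' s = ⇑e.symm ⁻¹' s := by
      ext u
      simp [ContinuousLinearEquiv.image_eq_preimage_symm]
    have h5 : μH[(m : ℝ)] (⇑e '' s) = ν s := by
      rw [h4, hν, Measure.map_apply e.symm.continuous.measurable hsm]
    rw [h3, h5, h1]
    conv_lhs => rw [huniq]
    rw [Measure.smul_apply, ENNReal.smul_def, smul_eq_mul]
  · -- non-injective case
    refine ⟨0, by simp, fun A hA hAm => ?_⟩
    rw [zero_mul]
    have hrank : Module.finrank ℝ (LinearMap.range f) < m := by
      have := LinearMap.finrank_range_add_finrank_ker f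
      rw [hV] at this
      have hker : LinearMap.ker f ≠ ⊥ := by
        intro h
        exact hinj (LinearMap.ker_eq_bot.1 h)
      have : 0 < Module.finrank ℝ (LinearMap.ker f) := by
        haveI : Nontrivial (LinearMap.ker f) := Submodule.nontrivial_iff_ne_bot.mpr hker
        exact Module.finrank_pos
      omega
    have hsub : ⇑π '' A ⊆ ((LinearMap.range f : Submodule ℝ X) : Set X) := by
      rw [himg A hA]
      rintro x ⟨v, hv, rfl⟩
      exact LinearMap.mem_range.2 ⟨v, rfl⟩
    have hdim : dimH ((LinearMap.range f : Submodule ℝ X) : Set X) =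
        Module.finrank ℝ (LinearMap.range f) := by
      have : ((LinearMap.range f : Submodule ℝ X) : Set X) =
          Subtype.val '' (Set.univ : Set (LinearMap.range f)) :=
        (Set.image_univ.trans Subtype.range_coe).symm
      rw [this, isometry_subtype_coe.dimH_image, Real.dimH_univ_eq_finrank (LinearMap.range f)]
    have hlt : dimH (⇑π '' A) < ((m : ℝ≥0) : ℝ≥0∞) := by
      calc dimH (⇑π '' A) ≤ dimH ((LinearMap.range f : Submodule ℝ X) : Set X) := dimH_mono hsub
        _ = Module.finrank ℝ (LinearMap.range f) := hdim
        _ < ((m : ℝ≥0) : ℝ≥0∞) := by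
            rw [show ((m : ℝ≥0) : ℝ≥0∞) = ((m : ℕ) : ℝ≥0∞) by simp]
            exact_mod_cast hrank
    have := hausdorffMeasure_of_dimH_lt hlt
    convert this using 2
    rw [NNReal.coe_natCast]

/-- Criterion for being a density contractor: if a Borel probability measure `μ` on the
rank-`≤ m` endomorphisms, supported in `Hom(X,W)`, contracts the `𝓗ᵐ` measure of a single
Borel subset of positive finite measure of each `m`-dimensional subspace `V` (with
equality for one such subset of `W`), then it does so for every Borel subset of every
`m`-dimensional subspace, with equality for subsets of `W`. -/
theorem stmt18 {X : Type*} [NormedAddCommGroup X] [NormedSpace ℝ X]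
    [FiniteDimensional ℝ X] [MeasurableSpace X] [BorelSpace X]
    [MeasurableSpace (X →L[ℝ] X)] [BorelSpace (X →L[ℝ] X)]
    (m : ℕ) (hm : 1 ≤ m) (W : Submodule ℝ X) (hW : Module.finrank ℝ W = m)
    (μ : Measure (X →L[ℝ] X)) [IsProbabilityMeasure μ]
    (hsupp : μ {π : X →L[ℝ] X |
      ¬ (Module.finrank ℝ (LinearMap.range π.toLinearMap) ≤ m ∧
          LinearMap.range π.toLinearMap ≤ W)} = 0)
    (h1 : ∀ V : Submodule ℝ X, Module.finrank ℝ V = m →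
      ∃ A : Set X, A ⊆ (V : Set X) ∧ MeasurableSet A ∧
        0 < μH[(m : ℝ)] A ∧ μH[(m : ℝ)] A < ⊤ ∧
        ∫⁻ π, μH[(m : ℝ)] (⇑π '' A) ∂μ ≤ μH[(m : ℝ)] A)
    (h2 : ∃ A : Set X, A ⊆ (W : Set X) ∧ MeasurableSet A ∧
        0 < μH[(m : ℝ)] A ∧ μH[(m : ℝ)] A < ⊤ ∧
        ∫⁻ π, μH[(m : ℝ)] (⇑π '' A) ∂μ = μH[(m : ℝ)] A) :
    (∀ V : Submodule ℝ X, Module.finrank ℝ V = m →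
      ∀ A : Set X, A ⊆ (V : Set X) → MeasurableSet A →
        ∫⁻ π, μH[(m : ℝ)] (⇑π '' A) ∂μ ≤ μH[(m : ℝ)] A) ∧
    (∀ A : Set X, A ⊆ (W : Set X) → MeasurableSet A →
        ∫⁻ π, μH[(m : ℝ)] (⇑π '' A) ∂μ = μH[(m : ℝ)] A) := by
  classical
  have main : ∀ V : Submodule ℝ X, Module.finrank ℝ V = m →
      ∀ A₀ : Set X, A₀ ⊆ (V : Set X) → MeasurableSet A₀ →
      0 < μH[(m : ℝ)] A₀ → μH[(m : ℝ)] A₀ < ⊤ →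
      ∃ c : (X →L[ℝ] X) → ℝ≥0∞,
        (∀ (π : X →L[ℝ] X) (A : Set X), A ⊆ (V : Set X) → MeasurableSet A →
          μH[(m : ℝ)] (⇑π '' A) = c π * μH[(m : ℝ)] A) ∧
        (∀ A : Set X, A ⊆ (V : Set X) → MeasurableSet A → μH[(m : ℝ)] A ≠ ⊤ →
          ∫⁻ π, μH[(m : ℝ)] (⇑π '' A) ∂μ = μH[(m : ℝ)] A * ∫⁻ π, c π ∂μ) := by
    intro V hV A₀ hA₀V hA₀m h₀pos h₀fin
    choose c hcne hc using fun π => key_lemma m V hV π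
    refine ⟨c, hc, fun A hAV hAm hAfin => ?_⟩
    calc ∫⁻ π, μH[(m : ℝ)] (⇑π '' A) ∂μ
        = ∫⁻ π, μH[(m : ℝ)] A * c π ∂μ := by
          refine lintegral_congr fun π => ?_
          rw [hc π A hAV hAm, mul_comm]
      _ = μH[(m : ℝ)] A * ∫⁻ π, c π ∂μ := lintegral_const_mul' _ _ hAfin
  constructor
  · intro V hV A hAV hAm
    obtain ⟨A₀, hA₀V, hA₀m, h₀pos, h₀fin, h₀le⟩ := h1 V hV
    obtain ⟨c, hc, hint⟩ := main V hV A₀ hA₀V hA₀m h₀pos h₀fin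
    have hI : ∫⁻ π, c π ∂μ ≤ 1 := by
      have h := h₀le
      rw [hint A₀ hA₀V hA₀m h₀fin.ne] at h
      have h' : μH[(m : ℝ)] A₀ * ∫⁻ π, c π ∂μ ≤ μH[(m : ℝ)] A₀ * 1 := by
        rwa [mul_one]
      exact (ENNReal.mul_le_mul_iff_right h₀pos.ne' h₀fin.ne).1 h'
    by_cases hAfin : μH[(m : ℝ)] A = ⊤
    · rw [hAfin]; exact le_top
    · rw [hint A hAV hAm hAfin]
      calc μH[(m : ℝ)] A * ∫⁻ π, c π ∂μ ≤ μH[(m : ℝ)] A * 1 := mul_le_mul_right hI _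
        _ = μH[(m : ℝ)] A := mul_one _
  · intro A hAV hAm
    obtain ⟨A₀, hA₀V, hA₀m, h₀pos, h₀fin, h₀eq⟩ := h2
    obtain ⟨c, hc, hint⟩ := main W hW A₀ hA₀V hA₀m h₀pos h₀fin
    have hI : ∫⁻ π, c π ∂μ = 1 := by
      have h := h₀eq
      rw [hint A₀ hA₀V hA₀m h₀fin.ne] at h
      conv_rhs at h => rw [← mul_one (μH[(m : ℝ)] A₀)]
      exact (ENNReal.mul_right_inj h₀pos.ne' h₀fin.ne).1 h
    by_cases hAfin : μH[(m : ℝ)] A = ⊤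
    · rw [hAfin]
      have heq : ∫⁻ π, μH[(m : ℝ)] (⇑π '' A) ∂μ = ∫⁻ π, c π * ⊤ ∂μ :=
        lintegral_congr fun π => by rw [hc π A hAV hAm, hAfin]
      rw [heq]
      apply ENNReal.eq_top_of_forall_nnreal_le
      intro r
      have hmono : ∀ π, (r : ℝ≥0∞) * c π ≤ c π * ⊤ := by
        intro π
        rcases eq_or_ne (c π) 0 with h0 | h0
        · simp [h0]
        · rw [mul_comm]
          exact mul_le_mul_right le_top _
      calc (r : ℝ≥0∞) = (r : ℝ≥0∞) * ∫⁻ π, c π ∂μ := by rw [hI, mul_one]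
        _ = ∫⁻ π, (r : ℝ≥0∞) * c π ∂μ := (lintegral_const_mul' _ _ ENNReal.coe_ne_top).symm
        _ ≤ ∫⁻ π, c π * ⊤ ∂μ := lintegral_mono hmono
    · rw [hint A hAV hAm hAfin, hI, mul_one]
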